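/- Let E be an étale F-algebra of degree n and K/F a quadratic field extension. The determinant of the hermitian space V_{E,1} (i.e., the class in F×/N_{K/F}(K×) of det(⟨eᵢ,eⱼ⟩₁) for any K-basis (eᵢ)) equals the class of det_F(E) = det(Tr_{E/F}(eᵢeⱼ)) (the determinant of the trace form of E/F) in F×/N_{K/F}(K×). -/

import Mathlib

open scoped TensorProduct
open Matrix


/-- The involution `σ = conj ⊗ id` on `K_E = K ⊗[F] E`. -/
noncomputable def tensorConj {F K E : Type} [Field F] [Field K] [Algebra F K]
    [CommRing E] [Algebra F E] (conj : K →ₐ[F] K) :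
    (K ⊗[F] E) →ₐ[F] (K ⊗[F] E) :=
  Algebra.TensorProduct.map conj (AlgHom.id F E)

/-- The hermitian form `⟨x,y⟩_μ = Tr_{K_E/K}(μ · x · σ(y))` on `K_E`. -/
noncomputable def hermFormOf {F K E : Type} [Field F] [Field K] [Algebra F K]
    [CommRing E] [Algebra F E] (conj : K →ₐ[F] K) (μ x y : K ⊗[F] E) : K :=
  Algebra.trace K (K ⊗[F] E) (μ * x * (tensorConj conj y))

section Aux
variable {F K E : Type} [Field F] [Field K] [Algebra F K] [CommRing E] [Algebra F E]

lemma trace_one_tmul {n : ℕ} (f : Module.Basis (Fin n) F E) (z : E) :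
    Algebra.trace K (K ⊗[F] E) (1 ⊗ₜ[F] z) = algebraMap F K (Algebra.trace F E z) := by
  rw [Algebra.trace_eq_matrix_trace (Algebra.TensorProduct.basis K f),
      Algebra.trace_eq_matrix_trace f]
  have h : Algebra.leftMulMatrix (Algebra.TensorProduct.basis K f) ((1 : K) ⊗ₜ[F] z)
      = (Algebra.leftMulMatrix f z).map (algebraMap F K) := by
    ext i j
    rw [Matrix.map_apply, Algebra.leftMulMatrix_eq_repr_mul, Algebra.leftMulMatrix_eq_repr_mul]
    simp [Algebra.TensorProduct.basis_apply, Algebra.TensorProduct.tmul_mul_tmul]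
  rw [h]
  simp [Matrix.trace, Matrix.diag, map_sum]

lemma tensorConj_smul (conj : K →ₐ[F] K) (c : K) (x : K ⊗[F] E) :
    tensorConj conj (c • x) = conj c • tensorConj conj x := by
  have h : tensorConj conj (algebraMap K (K ⊗[F] E) c) = algebraMap K (K ⊗[F] E) (conj c) := by
    simp [tensorConj, Algebra.TensorProduct.algebraMap_apply, Algebra.TensorProduct.map_tmul]
  rw [Algebra.smul_def, _root_.map_mul, h, ← Algebra.smul_def]

end Aux

/-- For `K/F` a quadratic field extension and `E/F` étale of degree
`n`, the Gram determinant of the hermitian space `V_{E,1}` with respect to any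
`K`-basis agrees, modulo norms `N_{K/F}(K×)`, with the determinant of the trace
form of `E/F` computed with respect to any `F`-basis of `E`. -/
theorem stmt6 (F K E : Type) [Field F] [Field K] [Algebra F K]
    [CommRing E] [Algebra F E] (n : ℕ)
    (hchar : (2 : F) ≠ 0)
    (hK2 : Module.finrank F K = 2)
    (conj : K →ₐ[F] K)
    (hconj : ∀ x, conj (conj x) = x)
    (hfix : ∀ x : K, conj x = x ↔ ∃ a : F, algebraMap F K a = x)
    [Module.Finite F E] (hEn : Module.finrank F E = n)
    (hEet : ∀ x : E, x ≠ 0 → ∃ y : E, Algebra.trace F E (x * y) ≠ 0)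
    (e : Module.Basis (Fin n) K (K ⊗[F] E)) (f : Module.Basis (Fin n) F E) :
    ∃ y : Kˣ,
      (Matrix.of fun i j => hermFormOf conj 1 (e i) (e j)).det
        = algebraMap F K (Matrix.of fun i j => Algebra.trace F E (f i * f j)).det
          * ((y : K) * conj (y : K)) := by
  classical
  set b : Module.Basis (Fin n) K (K ⊗[F] E) := Algebra.TensorProduct.basis K f with hb
  set M : Matrix (Fin n) (Fin n) K := b.toMatrix e with hMdef
  have hunit : IsUnit M.det := by
    apply IsUnit.of_mul_eq_one (a := M.det) (e.toMatrix b).det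
    rw [← Matrix.det_mul, Module.Basis.toMatrix_mul_toMatrix_flip, Matrix.det_one]
  refine ⟨hunit.unit, ?_⟩
  set G : Matrix (Fin n) (Fin n) F := Matrix.of fun i j => Algebra.trace F E (f i * f j) with hG
  have hconjb : ∀ k, tensorConj conj (b k) = b k := by
    intro k
    simp [tensorConj, hb, Algebra.TensorProduct.basis_apply, Algebra.TensorProduct.map_tmul]
  have key : (Matrix.of fun i j => hermFormOf conj 1 (e i) (e j))
      = Mᵀ * (G.map (algebraMap F K)) * (M.map conj) := by
    ext i j
    have hei : e i = ∑ k, M k i • b k := (b.sum_toMatrix_smul_self e i).symm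
    have hej : e j = ∑ l, M l j • b l := (b.sum_toMatrix_smul_self e j).symm
    have hσ : tensorConj conj (e j) = ∑ l, conj (M l j) • b l := by
      rw [hej, map_sum]
      exact Finset.sum_congr rfl fun l _ => by rw [tensorConj_smul, hconjb]
    have hbb : ∀ k l, Algebra.trace K (K ⊗[F] E) (b k * b l)
        = algebraMap F K (G k l) := by
      intro k l
      have : b k * b l = (1 : K) ⊗ₜ[F] (f k * f l) := by
        simp [hb, Algebra.TensorProduct.basis_apply, Algebra.TensorProduct.tmul_mul_tmul]
      rw [this, trace_one_tmul f]
      rfl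
    have lhs : hermFormOf conj 1 (e i) (e j)
        = ∑ k, ∑ l, M k i * conj (M l j) * algebraMap F K (G k l) := by
      unfold hermFormOf
      rw [one_mul, hei, hσ, Finset.sum_mul_sum, map_sum]
      refine Finset.sum_congr rfl fun k _ => ?_
      rw [map_sum]
      refine Finset.sum_congr rfl fun l _ => ?_
      rw [smul_mul_smul_comm, _root_.map_smul, smul_eq_mul, hbb]
    rw [Matrix.of_apply, lhs, Matrix.mul_apply]
    rw [Finset.sum_comm]
    refine Finset.sum_congr rfl fun l _ => ?_
    rw [Matrix.mul_apply, Finset.sum_mul]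
    refine Finset.sum_congr rfl fun k _ => ?_
    simp only [Matrix.transpose_apply, Matrix.map_apply]
    ring
  rw [key, Matrix.det_mul, Matrix.det_mul, Matrix.det_transpose]
  have h1 : (G.map (algebraMap F K)).det = algebraMap F K G.det :=
    (RingHom.map_det (algebraMap F K) G).symm
  have h2 : (M.map conj).det = conj M.det := by
    have := RingHom.map_det (conj : K →+* K) M
    simpa using this.symm
  rw [h1, h2, IsUnit.unit_spec]
  ring
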